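/- Let G be a d-regular undirected aperiodic multigraph on n vertices and H a regular multigraph on d vertices with λ(H) ≤ α. Then L(G²) ≈_ε L(G ⓢ H) for ε = ln(1/(1−α)), where L denotes the normalized Laplacian I − M. -/

import Mathlib

open Matrix

/-- Per-block estimate: for a symmetric doubly-stochastic `B` whose restriction to
mean-zero vectors has norm at most `α`, the quadratic form `‖w‖² - wᵀBw` is within factors
`1±α` of the squared distance of `w` from its mean. -/
lemma derand_block {d : ℕ} (hd : 0 < d)
    (B : Matrix (Fin d) (Fin d) ℝ) (hBsym : Bᵀ = B)
    (hBrow : ∀ i, ∑ j, B i j = 1)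
    (α : ℝ) (hα0 : 0 ≤ α)
    (hB : ∀ w : Fin d → ℝ, ∑ i, w i = 0 → (B *ᵥ w) ⬝ᵥ (B *ᵥ w) ≤ α ^ 2 * (w ⬝ᵥ w))
    (w : Fin d → ℝ) :
    0 ≤ (∑ j, w j ^ 2) - (∑ j, w j) ^ 2 / d ∧
    (1 - α) * ((∑ j, w j ^ 2) - (∑ j, w j) ^ 2 / d)
      ≤ (∑ j, w j ^ 2) - ∑ j, w j * ∑ k, B j k * w k ∧
    (∑ j, w j ^ 2) - ∑ j, w j * ∑ k, B j k * w k
      ≤ (1 + α) * ((∑ j, w j ^ 2) - (∑ j, w j) ^ 2 / d) := by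
  have hdR : (d : ℝ) ≠ 0 := Nat.cast_ne_zero.mpr hd.ne'
  set m : ℝ := (∑ j, w j) / d with hm
  set u : Fin d → ℝ := fun j => w j - m with hu
  have hsum_u : ∑ j, u j = 0 := by
    simp only [hu, Finset.sum_sub_distrib, Finset.sum_const, Finset.card_univ,
      Fintype.card_fin, nsmul_eq_mul, hm]
    field_simp
    ring
  have hcol : ∀ k, ∑ j, B j k = 1 := by
    intro k
    have h1 : ∑ j, B j k = ∑ j, Bᵀ k j := by simp [Matrix.transpose_apply]
    rw [h1, hBsym]
    exact hBrow k
  have hBu_sum : ∑ j, (B *ᵥ u) j = 0 := by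
    simp only [Matrix.mulVec, dotProduct]
    rw [Finset.sum_comm]
    calc ∑ k, ∑ j, B j k * u k = ∑ k, (∑ j, B j k) * u k := by
          simp [Finset.sum_mul]
      _ = ∑ k, u k := by simp [hcol]
      _ = 0 := hsum_u
  have hwu : ∀ j, w j = u j + m := by intro j; simp [hu]
  have hsq : ∑ j, w j ^ 2 = (∑ j, u j ^ 2) + d * m ^ 2 := by
    calc ∑ j, w j ^ 2 = ∑ j, (u j ^ 2 + 2 * m * u j + m ^ 2) := by
          refine Finset.sum_congr rfl fun j _ => ?_
          rw [hwu j]; ring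
      _ = _ := by
          rw [Finset.sum_add_distrib, Finset.sum_add_distrib, ← Finset.mul_sum, hsum_u,
            mul_zero, add_zero, Finset.sum_const, Finset.card_univ, Fintype.card_fin,
            nsmul_eq_mul]
  have hS : (∑ j, w j) ^ 2 / d = d * m ^ 2 := by
    rw [hm]; field_simp
  have hBvw : ∀ j, ∑ k, B j k * w k = (B *ᵥ u) j + m := by
    intro j
    simp only [Matrix.mulVec, dotProduct]
    calc ∑ k, B j k * w k = ∑ k, (B j k * u k + B j k * m) := by
          refine Finset.sum_congr rfl fun k _ => ?_
          rw [hwu k]; ring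
      _ = (∑ k, B j k * u k) + (∑ k, B j k) * m := by
          rw [Finset.sum_add_distrib, Finset.sum_mul]
      _ = _ := by rw [hBrow j]; ring
  have hmix : ∑ j, w j * ∑ k, B j k * w k
      = (∑ j, u j * (B *ᵥ u) j) + d * m ^ 2 := by
    calc ∑ j, w j * ∑ k, B j k * w k
        = ∑ j, (u j * (B *ᵥ u) j + m * (B *ᵥ u) j + u j * m + m * m) := by
          refine Finset.sum_congr rfl fun j _ => ?_
          rw [hBvw j]
          nth_rewrite 1 [hwu j]
          ring
      _ = _ := by
          rw [Finset.sum_add_distrib, Finset.sum_add_distrib, Finset.sum_add_distrib,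
            ← Finset.mul_sum, ← Finset.sum_mul, hsum_u, hBu_sum, mul_zero, zero_mul,
            add_zero, add_zero, Finset.sum_const, Finset.card_univ, Fintype.card_fin,
            nsmul_eq_mul]
          ring
  have hnn : 0 ≤ ∑ j, u j ^ 2 := Finset.sum_nonneg fun j _ => sq_nonneg _
  have hcs := Finset.sum_mul_sq_le_sq_mul_sq Finset.univ u (B *ᵥ u)
  have hB2 : ∑ j, (B *ᵥ u) j ^ 2 ≤ α ^ 2 * ∑ j, u j ^ 2 := by
    simpa [dotProduct, pow_two] using hB u hsum_u
  have hXsq : (∑ j, u j * (B *ᵥ u) j) ^ 2 ≤ (α * ∑ j, u j ^ 2) ^ 2 := by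
    calc (∑ j, u j * (B *ᵥ u) j) ^ 2
        ≤ (∑ j, u j ^ 2) * ∑ j, (B *ᵥ u) j ^ 2 := hcs
      _ ≤ (∑ j, u j ^ 2) * (α ^ 2 * ∑ j, u j ^ 2) :=
          mul_le_mul_of_nonneg_left hB2 hnn
      _ = (α * ∑ j, u j ^ 2) ^ 2 := by ring
  have hαs : 0 ≤ α * ∑ j, u j ^ 2 := mul_nonneg hα0 hnn
  have habs1 : ∑ j, u j * (B *ᵥ u) j ≤ α * ∑ j, u j ^ 2 := by nlinarith [hXsq, hαs]
  have habs2 : -(α * ∑ j, u j ^ 2) ≤ ∑ j, u j * (B *ᵥ u) j := by nlinarith [hXsq, hαs]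
  refine ⟨?_, ?_, ?_⟩
  · rw [hsq, hS]; linarith
  · rw [hsq, hS, hmix]; nlinarith [habs1, hnn]
  · rw [hsq, hS, hmix]; nlinarith [habs2, hnn]

/-- The derandomized square spectrally approximates the true square: for a d-regular
undirected aperiodic multigraph G on n vertices (given by an involutive rotation map)
and a regular (1/2-lazy) multigraph H on d vertices with transition matrix B and
λ(H) ≤ α, we have L(G²) ≈_ε L(G ⓢ H) for ε = ln(1/(1−α)), where the transition matrix
of G ⓢ H is M̃ = P Ã B̃ Ã Q and that of G² is (P Ã Q)². -/
theorem derandomized_square_spectral_approx {n d : ℕ} (hn : 0 < n) (hd : 0 < d)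
    (Rot : Fin n × Fin d → Fin n × Fin d) (hRot : Function.Involutive Rot)
    (B : Matrix (Fin d) (Fin d) ℝ) (hBsym : Bᵀ = B)
    (hBnn : ∀ i j, 0 ≤ B i j) (hBrow : ∀ i, ∑ j, B i j = 1)
    (hBlazy : ∀ i, (1 : ℝ) / 2 ≤ B i i)
    (α ε : ℝ) (hα0 : 0 ≤ α) (hα1 : α < 1) (hε : ε = Real.log (1 / (1 - α)))
    (hB : ∀ w : Fin d → ℝ, ∑ i, w i = 0 → (B *ᵥ w) ⬝ᵥ (B *ᵥ w) ≤ α ^ 2 * (w ⬝ᵥ w)) :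
    let Q : Matrix (Fin n × Fin d) (Fin n) ℝ := fun p v => if p.1 = v then (1 : ℝ) / d else 0
    let Pm : Matrix (Fin n) (Fin n × Fin d) ℝ := fun v p => if p.1 = v then 1 else 0
    let At : Matrix (Fin n × Fin d) (Fin n × Fin d) ℝ := fun p q => if Rot p = q then 1 else 0
    let Bt : Matrix (Fin n × Fin d) (Fin n × Fin d) ℝ :=
      fun p q => if p.1 = q.1 then B p.2 q.2 else 0
    let MG : Matrix (Fin n) (Fin n) ℝ := Pm * At * Q
    let Mds : Matrix (Fin n) (Fin n) ℝ := Pm * At * Bt * At * Q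
    -- aperiodicity of G: −1 is not an eigenvalue of its transition matrix
    ((1 : Matrix (Fin n) (Fin n) ℝ) + MG).PosDef →
    (((1 - Mds) - Real.exp (-ε) • ((1 : Matrix (Fin n) (Fin n) ℝ) - MG * MG)).PosSemidef ∧
      (Real.exp ε • ((1 : Matrix (Fin n) (Fin n) ℝ) - MG * MG) - (1 - Mds)).PosSemidef) := by
  intro Q Pm At Bt MG Mds _hap
  have hdR : (d : ℝ) ≠ 0 := Nat.cast_ne_zero.mpr hd.ne'
  have hdpos : (0 : ℝ) < d := by positivity
  have h1α : (0 : ℝ) < 1 - α := by linarith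
  have hexpneg : Real.exp (-ε) = 1 - α := by
    rw [hε, one_div, Real.log_inv, neg_neg, Real.exp_log h1α]
  have hexppos : Real.exp ε = (1 - α)⁻¹ := by
    rw [hε, one_div, Real.exp_log (inv_pos.mpr h1α)]
  have hRR : ∀ p, Rot (Rot p) = p := hRot
  -- entrywise descriptions of the matrix-vector products
  have hQx : ∀ (x : Fin n → ℝ) p, (Q *ᵥ x) p = x p.1 / d := by
    intro x p
    show (∑ v, (if p.1 = v then (1 : ℝ) / d else 0) * x v) = x p.1 / d
    simp only [ite_mul, zero_mul, Finset.sum_ite_eq, Finset.mem_univ, if_true]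
    ring
  have hAtx : ∀ (w : Fin n × Fin d → ℝ) p, (At *ᵥ w) p = w (Rot p) := by
    intro w p
    show (∑ q, (if Rot p = q then (1 : ℝ) else 0) * w q) = w (Rot p)
    simp only [ite_mul, one_mul, zero_mul, Finset.sum_ite_eq, Finset.mem_univ, if_true]
  have hBtx : ∀ (w : Fin n × Fin d → ℝ) p, (Bt *ᵥ w) p = ∑ k, B p.2 k * w (p.1, k) := by
    intro w p
    show (∑ q : Fin n × Fin d, (if p.1 = q.1 then B p.2 q.2 else 0) * w q) = _
    rw [Fintype.sum_prod_type, Finset.sum_comm]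
    refine Finset.sum_congr rfl fun k _ => ?_
    simp [ite_mul, Finset.sum_ite_eq]
  have hPmx : ∀ (w : Fin n × Fin d → ℝ) v, (Pm *ᵥ w) v = ∑ j, w (v, j) := by
    intro w v
    show (∑ q : Fin n × Fin d, (if q.1 = v then (1 : ℝ) else 0) * w q) = _
    rw [Fintype.sum_prod_type, Finset.sum_comm]
    refine Finset.sum_congr rfl fun k _ => ?_
    simp [ite_mul, Finset.sum_ite_eq']
  have hswap : ∀ F : Fin n × Fin d → ℝ, (∑ p, F (Rot p)) = ∑ p, F p := by
    intro F
    exact Fintype.sum_bijective Rot hRot.bijective _ F (fun p => rfl)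
  -- symmetry facts
  have hBe : ∀ a b, B a b = B b a := by
    intro a b
    nth_rewrite 1 [← hBsym]
    rw [Matrix.transpose_apply]
  have hAtT : Atᵀ = At := by
    ext p q
    show (if Rot q = p then (1 : ℝ) else 0) = if Rot p = q then 1 else 0
    have hiff : Rot q = p ↔ Rot p = q := by
      constructor <;> intro h <;> rw [← h, hRR]
    simp [hiff]
  have hBtT : Btᵀ = Bt := by
    ext p q
    show (if q.1 = p.1 then B q.2 p.2 else 0) = if p.1 = q.1 then B p.2 q.2 else 0
    rw [hBe]
    exact if_congr eq_comm rfl rfl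
  have hQT : Qᵀ = (d : ℝ)⁻¹ • Pm := by
    ext v p
    show (if p.1 = v then (1 : ℝ) / d else 0) = (d : ℝ)⁻¹ * (if p.1 = v then 1 else 0)
    split <;> simp [one_div]
  have hPmT : Pmᵀ = (d : ℝ) • Q := by
    ext p v
    show (if p.1 = v then (1 : ℝ) else 0) = (d : ℝ) * (if p.1 = v then (1 : ℝ) / d else 0)
    split <;> field_simp <;> simp
  have hMGdef : MG = Pm * At * Q := rfl
  have hMdsdef : Mds = Pm * At * Bt * At * Q := rfl
  have hMGT : MGᵀ = MG := by
    rw [hMGdef, Matrix.transpose_mul, Matrix.transpose_mul, hQT, hAtT, hPmT]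
    rw [Matrix.smul_mul, Matrix.mul_smul, Matrix.mul_smul, smul_smul,
      inv_mul_cancel₀ hdR, one_smul, Matrix.mul_assoc]
  have hMdsT : Mdsᵀ = Mds := by
    rw [hMdsdef, Matrix.transpose_mul, Matrix.transpose_mul, Matrix.transpose_mul,
      Matrix.transpose_mul, hQT, hAtT, hBtT, hPmT]
    rw [Matrix.smul_mul, Matrix.mul_smul, Matrix.mul_smul, Matrix.mul_smul,
      Matrix.mul_smul, smul_smul, inv_mul_cancel₀ hdR, one_smul,
      Matrix.mul_assoc, Matrix.mul_assoc, Matrix.mul_assoc]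
  have hMGH : MGᴴ = MG := by
    rw [Matrix.conjTranspose_eq_transpose_of_trivial, hMGT]
  have hMdsH : Mdsᴴ = Mds := by
    rw [Matrix.conjTranspose_eq_transpose_of_trivial, hMdsT]
  have hco : (1 + α) ≤ (1 - α)⁻¹ := by
    rw [show (1 - α)⁻¹ = 1 / (1 - α) from (one_div _).symm, le_div_iff₀ h1α]
    nlinarith [sq_nonneg α]
  -- the quadratic-form bounds
  have bounds : ∀ x : Fin n → ℝ,
      0 ≤ x ⬝ᵥ (((1 : Matrix (Fin n) (Fin n) ℝ) - MG * MG) *ᵥ x) ∧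
      (1 - α) * (x ⬝ᵥ (((1 : Matrix (Fin n) (Fin n) ℝ) - MG * MG) *ᵥ x))
        ≤ x ⬝ᵥ (((1 : Matrix (Fin n) (Fin n) ℝ) - Mds) *ᵥ x) ∧
      x ⬝ᵥ (((1 : Matrix (Fin n) (Fin n) ℝ) - Mds) *ᵥ x)
        ≤ (1 - α)⁻¹ * (x ⬝ᵥ (((1 : Matrix (Fin n) (Fin n) ℝ) - MG * MG) *ᵥ x)) := by
    intro x
    -- x ⬝ x in terms of the lifted vector y p = x (Rot p).1
    have q0 : x ⬝ᵥ x = (∑ v, ∑ j, x (Rot (v, j)).1 ^ 2) / d := by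
      have h1 : (∑ v, ∑ j, x (Rot (v, j)).1 ^ 2)
          = ∑ p : Fin n × Fin d, (fun p : Fin n × Fin d => x (Rot p).1 ^ 2) p :=
        (Fintype.sum_prod_type (f := fun p : Fin n × Fin d => x (Rot p).1 ^ 2)).symm
      have h2 : (∑ p : Fin n × Fin d, x (Rot p).1 ^ 2) = ∑ p : Fin n × Fin d, x p.1 ^ 2 :=
        hswap (fun p => x p.1 ^ 2)
      have h3 : (∑ p : Fin n × Fin d, x p.1 ^ 2) = ∑ v, (d : ℝ) * x v ^ 2 := by
        rw [Fintype.sum_prod_type]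
        simp [Finset.sum_const, Finset.card_univ, mul_comm]
      have h4 : (∑ v, x v * x v) = (∑ v, (d : ℝ) * x v ^ 2) / d := by
        rw [Finset.sum_div]
        refine Finset.sum_congr rfl fun v _ => ?_
        field_simp
      show (∑ v, x v * x v) = _
      rw [h1, h2, h3]
      exact h4
    -- x ⬝ Mds x
    have qMds : x ⬝ᵥ (Mds *ᵥ x)
        = (∑ v, ∑ j, x (Rot (v, j)).1 * ∑ k, B j k * x (Rot (v, k)).1) / d := by
      have e1 : Mds *ᵥ x = Pm *ᵥ (At *ᵥ (Bt *ᵥ (At *ᵥ (Q *ᵥ x)))) := by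
        rw [hMdsdef]
        simp only [← Matrix.mulVec_mulVec]
      have e2 : ∀ p : Fin n × Fin d, (Bt *ᵥ (At *ᵥ (Q *ᵥ x))) p
          = ∑ k, B p.2 k * (x (Rot (p.1, k)).1 / d) := by
        intro p
        rw [hBtx]
        refine Finset.sum_congr rfl fun k _ => ?_
        rw [hAtx, hQx]
      have e3 : x ⬝ᵥ (Mds *ᵥ x)
          = ∑ p : Fin n × Fin d,
              x p.1 * ∑ k, B (Rot p).2 k * (x (Rot ((Rot p).1, k)).1 / d) := by
        rw [e1]
        show (∑ v, x v * (Pm *ᵥ (At *ᵥ (Bt *ᵥ (At *ᵥ (Q *ᵥ x))))) v) = _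
        rw [Fintype.sum_prod_type]
        refine Finset.sum_congr rfl fun v _ => ?_
        rw [hPmx, Finset.mul_sum]
        refine Finset.sum_congr rfl fun j _ => ?_
        rw [hAtx, e2]
      have e4 : (∑ p : Fin n × Fin d,
              x p.1 * ∑ k, B (Rot p).2 k * (x (Rot ((Rot p).1, k)).1 / d))
          = ∑ p : Fin n × Fin d,
              x (Rot p).1 * ∑ k, B p.2 k * (x (Rot (p.1, k)).1 / d) := by
        rw [← hswap (fun p => x (Rot p).1 * ∑ k, B p.2 k * (x (Rot (p.1, k)).1 / d))]
        refine Finset.sum_congr rfl fun p _ => ?_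
        simp only [hRR]
      have e5 : (∑ p : Fin n × Fin d,
              x (Rot p).1 * ∑ k, B p.2 k * (x (Rot (p.1, k)).1 / d))
          = (∑ v, ∑ j, x (Rot (v, j)).1 * ∑ k, B j k * x (Rot (v, k)).1) / d := by
        rw [Fintype.sum_prod_type, Finset.sum_div]
        refine Finset.sum_congr rfl fun v _ => ?_
        rw [Finset.sum_div]
        refine Finset.sum_congr rfl fun j _ => ?_
        show x (Rot (v, j)).1 * (∑ k, B j k * (x (Rot (v, k)).1 / d))
            = (x (Rot (v, j)).1 * ∑ k, B j k * x (Rot (v, k)).1) / d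
        rw [Finset.mul_sum, Finset.mul_sum, Finset.sum_div]
        exact Finset.sum_congr rfl fun k _ => by ring
      rw [e3, e4, e5]
    -- x ⬝ (MG * MG) x
    have qM2 : x ⬝ᵥ ((MG * MG) *ᵥ x)
        = (∑ v, (∑ j, x (Rot (v, j)).1) ^ 2 / d) / d := by
      have e1 : (MG * MG) *ᵥ x
          = Pm *ᵥ (At *ᵥ (Q *ᵥ (Pm *ᵥ (At *ᵥ (Q *ᵥ x))))) := by
        show (Pm * At * Q * (Pm * At * Q)) *ᵥ x = _
        simp only [← Matrix.mulVec_mulVec]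
      have e2 : ∀ w : Fin n, (Pm *ᵥ (At *ᵥ (Q *ᵥ x))) w = ∑ k, x (Rot (w, k)).1 / d := by
        intro w
        rw [hPmx]
        refine Finset.sum_congr rfl fun k _ => ?_
        rw [hAtx, hQx]
      have e3 : x ⬝ᵥ ((MG * MG) *ᵥ x)
          = ∑ p : Fin n × Fin d,
              x p.1 * ((∑ k, x (Rot ((Rot p).1, k)).1 / d) / d) := by
        rw [e1]
        show (∑ v, x v * (Pm *ᵥ (At *ᵥ (Q *ᵥ (Pm *ᵥ (At *ᵥ (Q *ᵥ x)))))) v) = _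
        rw [Fintype.sum_prod_type]
        refine Finset.sum_congr rfl fun v _ => ?_
        rw [hPmx, Finset.mul_sum]
        refine Finset.sum_congr rfl fun j _ => ?_
        rw [hAtx, hQx, e2]
      have e4 : (∑ p : Fin n × Fin d, x p.1 * ((∑ k, x (Rot ((Rot p).1, k)).1 / d) / d))
          = ∑ p : Fin n × Fin d, x (Rot p).1 * ((∑ k, x (Rot (p.1, k)).1 / d) / d) := by
        rw [← hswap (fun p => x (Rot p).1 * ((∑ k, x (Rot (p.1, k)).1 / d) / d))]
        refine Finset.sum_congr rfl fun p _ => ?_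
        simp only [hRR]
      have e5 : (∑ p : Fin n × Fin d, x (Rot p).1 * ((∑ k, x (Rot (p.1, k)).1 / d) / d))
          = (∑ v, (∑ j, x (Rot (v, j)).1) ^ 2 / d) / d := by
        rw [Fintype.sum_prod_type, Finset.sum_div]
        refine Finset.sum_congr rfl fun v _ => ?_
        show (∑ j, x (Rot (v, j)).1 * ((∑ k, x (Rot (v, k)).1 / d) / d))
            = (∑ j, x (Rot (v, j)).1) ^ 2 / d / d
        rw [← Finset.sum_mul, ← Finset.sum_div]
        ring
      rw [e3, e4, e5]
    -- per-block estimates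
    have k0 : ∀ v : Fin n,
        0 ≤ (∑ j, x (Rot (v, j)).1 ^ 2) - (∑ j, x (Rot (v, j)).1) ^ 2 / d :=
      fun v => (derand_block hd B hBsym hBrow α hα0 hB (fun j => x (Rot (v, j)).1)).1
    have k1 : ∀ v : Fin n,
        (1 - α) * ((∑ j, x (Rot (v, j)).1 ^ 2) - (∑ j, x (Rot (v, j)).1) ^ 2 / d)
          ≤ (∑ j, x (Rot (v, j)).1 ^ 2) - ∑ j, x (Rot (v, j)).1 * ∑ k, B j k * x (Rot (v, k)).1 :=
      fun v => (derand_block hd B hBsym hBrow α hα0 hB (fun j => x (Rot (v, j)).1)).2.1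
    have k2 : ∀ v : Fin n,
        (∑ j, x (Rot (v, j)).1 ^ 2) - ∑ j, x (Rot (v, j)).1 * ∑ k, B j k * x (Rot (v, k)).1
          ≤ (1 + α) * ((∑ j, x (Rot (v, j)).1 ^ 2) - (∑ j, x (Rot (v, j)).1) ^ 2 / d) :=
      fun v => (derand_block hd B hBsym hBrow α hα0 hB (fun j => x (Rot (v, j)).1)).2.2
    have hA : x ⬝ᵥ (((1 : Matrix (Fin n) (Fin n) ℝ) - MG * MG) *ᵥ x)
        = (∑ v, ((∑ j, x (Rot (v, j)).1 ^ 2) - (∑ j, x (Rot (v, j)).1) ^ 2 / d)) / d := by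
      rw [Matrix.sub_mulVec, Matrix.one_mulVec, dotProduct_sub, q0, qM2,
        Finset.sum_sub_distrib, sub_div]
    have hBq : x ⬝ᵥ (((1 : Matrix (Fin n) (Fin n) ℝ) - Mds) *ᵥ x)
        = (∑ v, ((∑ j, x (Rot (v, j)).1 ^ 2)
            - ∑ j, x (Rot (v, j)).1 * ∑ k, B j k * x (Rot (v, k)).1)) / d := by
      rw [Matrix.sub_mulVec, Matrix.one_mulVec, dotProduct_sub, q0, qMds,
        Finset.sum_sub_distrib, sub_div]
    refine ⟨?_, ?_, ?_⟩
    · rw [hA]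
      exact div_nonneg (Finset.sum_nonneg fun v _ => k0 v) hdpos.le
    · rw [hA, hBq, ← mul_div_assoc]
      gcongr
      rw [Finset.mul_sum]
      exact Finset.sum_le_sum fun v _ => k1 v
    · rw [hA, hBq, ← mul_div_assoc]
      gcongr
      rw [Finset.mul_sum]
      refine Finset.sum_le_sum fun v _ => ?_
      calc (∑ j, x (Rot (v, j)).1 ^ 2)
            - ∑ j, x (Rot (v, j)).1 * ∑ k, B j k * x (Rot (v, k)).1
          ≤ (1 + α) * ((∑ j, x (Rot (v, j)).1 ^ 2) - (∑ j, x (Rot (v, j)).1) ^ 2 / d) :=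
            k2 v
        _ ≤ (1 - α)⁻¹ * ((∑ j, x (Rot (v, j)).1 ^ 2) - (∑ j, x (Rot (v, j)).1) ^ 2 / d) :=
            mul_le_mul_of_nonneg_right hco (k0 v)
  constructor
  · refine Matrix.PosSemidef.of_dotProduct_mulVec_nonneg ?_ ?_
    · show _ᴴ = _
      simp only [Matrix.conjTranspose_sub, Matrix.conjTranspose_smul,
        Matrix.conjTranspose_one, Matrix.conjTranspose_mul, hMGH, hMdsH, star_trivial]
    · intro x
      have hst : star x = x := by
        funext i; exact star_trivial _
      rw [hst]
      obtain ⟨h0, h1, _⟩ := bounds x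
      rw [Matrix.sub_mulVec, Matrix.smul_mulVec, dotProduct_sub, dotProduct_smul,
        smul_eq_mul, hexpneg]
      linarith
  · refine Matrix.PosSemidef.of_dotProduct_mulVec_nonneg ?_ ?_
    · show _ᴴ = _
      simp only [Matrix.conjTranspose_sub, Matrix.conjTranspose_smul,
        Matrix.conjTranspose_one, Matrix.conjTranspose_mul, hMGH, hMdsH, star_trivial]
    · intro x
      have hst : star x = x := by
        funext i; exact star_trivial _
      rw [hst]
      obtain ⟨h0, _, h2⟩ := bounds x
      rw [Matrix.sub_mulVec, Matrix.smul_mulVec, dotProduct_sub, dotProduct_smul,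
        smul_eq_mul, hexppos]
      linarith
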